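/- arXiv:1211.2301 — 2 statements merged into one kernel-verified Lean document; each statement's English description precedes it below -/
import Mathlib

section
/- Let e be a transitive relation on a set E. For every open subset u of e and every pair (a,b) ∈ u, there exists a set U such that (a,b,U) ∈ F(e) and (a,b) ∈ ⟨a,b,U⟩ ⊆ u. In particular, every open subset of e is a set-theoretic union of clopen subsets of e. -/
/-- A binary relation (as a set of pairs) is transitive. -/
def TransRel {E : Type*} (a : Set (E × E)) : Prop :=
  ∀ x y z : E, (x, y) ∈ a → (y, z) ∈ a → (x, z) ∈ a

/-- The transitive closure of a set of pairs. -/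
def tcl {E : Type*} (a : Set (E × E)) : Set (E × E) :=
  {p | Relation.TransGen (fun u v => (u, v) ∈ a) p.1 p.2}

/-- The interior of `a` relative to `e`. -/
def tint {E : Type*} (e a : Set (E × E)) : Set (E × E) :=
  e \ tcl (e \ a)

/-- `a` is a closed subset of `e`. -/
def IsClosedIn {E : Type*} (e a : Set (E × E)) : Prop :=
  a ⊆ e ∧ TransRel a

/-- `a` is an open subset of `e`. -/
def IsOpenIn {E : Type*} (e a : Set (E × E)) : Prop :=
  a ⊆ e ∧ TransRel (e \ a)

/-- `a` is a clopen subset of `e`. -/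
def IsClopenIn {E : Type*} (e a : Set (E × E)) : Prop :=
  a ⊆ e ∧ TransRel a ∧ TransRel (e \ a)

/-- `a` is a regular closed subset of `e`. -/
def RegClosed {E : Type*} (e a : Set (E × E)) : Prop :=
  a ⊆ e ∧ a = tcl (tint e a)

/-- The reflexive preordering `x ⊴ y` associated with `e`. -/
def rle {E : Type*} (e : Set (E × E)) (x y : E) : Prop :=
  (x, y) ∈ e ∨ x = y

/-- `x ≡ y`: `x ⊴ y` and `y ⊴ x`. -/
def eqv {E : Type*} (e : Set (E × E)) (x y : E) : Prop :=
  rle e x y ∧ rle e y x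

/-- `e` is square-free. -/
def SqFree {E : Type*} (e : Set (E × E)) : Prop :=
  ∀ a b x y : E, (a, b) ∈ e → rle e a x → rle e x b → rle e a y → rle e y b →
    rle e x y ∨ rle e y x

/-- The interval `[a,b] = {x | a ⊴ x ⊴ b}`. -/
def cce {E : Type*} (e : Set (E × E)) (a b : E) : Set E :=
  {x | rle e a x ∧ rle e x b}

/-- `(a,b,U) ∈ F(e)`. -/
def Ftriple {E : Type*} (e : Set (E × E)) (a b : E) (U : Set E) : Prop :=
  (a, b) ∈ e ∧ U ⊆ cce e a b ∧ (a ≠ b → a ∉ U ∧ b ∈ U)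

/-- The clopen set `⟨a,b,U⟩ = e ∩ (({a} ∪ Uᶜ) × ({b} ∪ U))`. -/
def pji {E : Type*} (e : Set (E × E)) (a b : E) (U : Set E) : Set (E × E) :=
  e ∩ ((({a} : Set E) ∪ (cce e a b \ U)) ×ˢ (({b} : Set E) ∪ U))

/-- The set `p₋` associated with `p = ⟨a,b,U⟩`: if `a ≠ b` it is
`p \ ([a] × [b])`, and if `a = b` it is `p \ {(a,a)}`. -/
def pminus {E : Type*} (e : Set (E × E)) (a b : E) (U : Set E) : Set (E × E) :=
  {z ∈ pji e a b U | ¬ ((a ≠ b ∧ eqv e z.1 a ∧ eqv e z.2 b) ∨ (a = b ∧ z = (a, a)))}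

lemma pji_clopen {E : Type*} (e : Set (E × E)) (he : TransRel e) (a b : E) (U : Set E)
    (hU : U ⊆ cce e a b) : IsClopenIn e (pji e a b U) := by
  refine ⟨Set.inter_subset_left, ?_, ?_⟩
  · rintro x y z ⟨hxy, hx, -⟩ ⟨hyz, -, hz⟩
    exact ⟨he _ _ _ hxy hyz, hx, hz⟩
  · rintro x y z ⟨hxy, hxyp⟩ ⟨hyz, hyzp⟩
    have hxz : (x, z) ∈ e := he _ _ _ hxy hyz
    refine ⟨hxz, fun hp => ?_⟩
    obtain ⟨-, hx, hz⟩ := hp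
    have hay : rle e a y := by
      rcases hx with hx | hx
      · exact Or.inl (Set.mem_singleton_iff.mp hx ▸ hxy)
      · rcases hx.1.1 with h | h
        · exact Or.inl (he _ _ _ h hxy)
        · exact Or.inl (h ▸ hxy)
    have hyb : rle e y b := by
      rcases hz with hz | hz
      · exact Or.inl (Set.mem_singleton_iff.mp hz ▸ hyz)
      · rcases (hU hz).2 with h | h
        · exact Or.inl (he _ _ _ hyz h)
        · exact Or.inl (h ▸ hyz)
    have hynB : y ∉ (({b} : Set E) ∪ U) := fun h => hxyp ⟨hxy, hx, h⟩
    have hynA : y ∉ (({a} : Set E) ∪ (cce e a b \ U)) := fun h => hyzp ⟨hyz, h, hz⟩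
    exact hynA (Or.inr ⟨⟨hay, hyb⟩, fun h => hynB (Or.inr h)⟩)

/-- for every open `u ⊆ e` and every `(a,b) ∈ u` there is `U` with
`(a,b,U) ∈ F(e)` and `(a,b) ∈ ⟨a,b,U⟩ ⊆ u`; in particular every open subset of `e` is a
union of clopen subsets of `e`. -/
theorem open_union_of_pji {E : Type*} (e : Set (E × E)) (he : TransRel e) :
    (∀ u : Set (E × E), IsOpenIn e u → ∀ a b : E, (a, b) ∈ u →
      ∃ U : Set E, Ftriple e a b U ∧ (a, b) ∈ pji e a b U ∧ pji e a b U ⊆ u) ∧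
    (∀ u : Set (E × E), IsOpenIn e u → u = ⋃₀ {c | IsClopenIn e c ∧ c ⊆ u}) := by
  have key : ∀ u : Set (E × E), IsOpenIn e u → ∀ a b : E, (a, b) ∈ u →
      ∃ U : Set E, Ftriple e a b U ∧ (a, b) ∈ pji e a b U ∧ pji e a b U ⊆ u := by
    intro u hu a b hab
    obtain ⟨hue, hc⟩ := hu
    refine ⟨{x ∈ cce e a b | x = b ∨ (x, b) ∈ e \ u}, ⟨hue hab, fun x hx => hx.1, ?_⟩, ?_, ?_⟩
    · intro hne
      constructor
      · rintro ⟨-, h | h⟩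
        · exact hne h
        · exact h.2 hab
      · exact ⟨⟨Or.inl (hue hab), Or.inr rfl⟩, Or.inl rfl⟩
    · exact ⟨hue hab, Or.inl rfl, Or.inl rfl⟩
    · rintro ⟨x, y⟩ ⟨hxy, hx, hy⟩
      by_contra hxyu
      have hxb : (x, b) ∈ e \ u := by
        rcases hy with hy | hy
        · have : y = b := hy
          exact this ▸ ⟨hxy, hxyu⟩
        · rcases hy.2 with h | h
          · exact h ▸ ⟨hxy, hxyu⟩
          · exact hc _ _ _ ⟨hxy, hxyu⟩ h
      rcases hx with hx | hx
      · have : x = a := hx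
        subst this
        exact hxb.2 hab
      · exact hx.2 ⟨hx.1, Or.inr hxb⟩
  refine ⟨key, fun u hu => ?_⟩
  apply Set.eq_of_subset_of_subset
  · rintro ⟨a, b⟩ hab
    obtain ⟨U, hF, hmem, hsub⟩ := key u hu a b hab
    exact ⟨pji e a b U, ⟨pji_clopen e he a b U hF.2.1, hsub⟩, hmem⟩
  · rintro z ⟨c, ⟨-, hcu⟩, hz⟩
    exact hcu hz
end

section
/- Let e be a transitive relation on a set E, let (a,b,U), (c,d,V) ∈ F(e) with a = b and c ≠ d, and set p = ⟨a,b,U⟩, q = ⟨c,d,V⟩, Uᶜ = [a,b] \ U, Vᶜ = [c,d] \ V. Then p ∩ q ≠ ∅ and p ∩ q₋ = ∅ if and only if a ≡ c, a ≡ d, ({a} ∪ U) ∩ V ≠ ∅, and ({a} ∪ Uᶜ) ∩ Vᶜ ≠ ∅. (This characterizes the arrow relation p ↗ q⊥ between completely join-irreducible and completely meet-irreducible elements of Reg(e).) -/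
section Aux
variable {E : Type*} {e : Set (E × E)}

lemma rle_trans' (he : TransRel e) {x y z : E} (h1 : rle e x y) (h2 : rle e y z) :
    rle e x z := by
  rcases h1 with h1 | rfl
  · rcases h2 with h2 | rfl
    · exact Or.inl (he _ _ _ h1 h2)
    · exact Or.inl h1
  · exact h2

lemma eqv_trans' (he : TransRel e) {x y z : E} (h1 : eqv e x y) (h2 : eqv e y z) :
    eqv e x z :=
  ⟨rle_trans' he h1.1 h2.1, rle_trans' he h2.2 h1.2⟩

lemma eqv_symm' {x y : E} (h : eqv e x y) : eqv e y x := ⟨h.2, h.1⟩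

end Aux

/-- arrow relation `p ↗ q⊥` for a clepsydra `p` (case `a = b`) and a
bipartite `q` (case `c ≠ d`). -/
theorem arrow_clepsydra_bipartite {E : Type*} (e : Set (E × E)) (he : TransRel e)
    (a b c d : E) (U V : Set E) (hp : Ftriple e a b U) (hq : Ftriple e c d V)
    (hab : a = b) (hcd : c ≠ d) :
    ((pji e a b U ∩ pji e c d V).Nonempty ∧ pji e a b U ∩ pminus e c d V = ∅) ↔
      (eqv e a c ∧ eqv e a d ∧
        ((({a} : Set E) ∪ U) ∩ V).Nonempty ∧
        ((({a} : Set E) ∪ (cce e a b \ U)) ∩ (cce e c d \ V)).Nonempty) := by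
  subst hab
  obtain ⟨hae, hU, -⟩ := hp
  obtain ⟨hce, hV, hcdV⟩ := hq
  obtain ⟨hcV, hdV⟩ := hcdV hcd
  have memA : ∀ x : E, x ∈ ({a} : Set E) ∪ (cce e a a \ U) → eqv e x a := by
    rintro x (rfl | hx)
    · exact ⟨Or.inr rfl, Or.inr rfl⟩
    · exact ⟨hx.1.2, hx.1.1⟩
  have memB : ∀ y : E, y ∈ ({a} : Set E) ∪ U → eqv e y a := by
    rintro y (rfl | hy)
    · exact ⟨Or.inr rfl, Or.inr rfl⟩
    · exact ⟨(hU hy).2, (hU hy).1⟩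
  constructor
  · rintro ⟨⟨⟨x, y⟩, ⟨hxe, hx1, hy1⟩, hxe', hx2, hy2⟩, hempty⟩
    have hxy : eqv e x c ∧ eqv e y d := by
      by_contra h
      have hmem : (x, y) ∈ pji e a a U ∩ pminus e c d V :=
        ⟨⟨hxe, hx1, hy1⟩, ⟨hxe', hx2, hy2⟩, by
          rintro (⟨-, h1, h2⟩ | ⟨h1, -⟩)
          · exact h ⟨h1, h2⟩
          · exact hcd h1⟩
      rw [hempty] at hmem
      exact hmem
    have hxa := memA x hx1
    have hya := memB y hy1
    refine ⟨eqv_trans' he (eqv_symm' hxa) hxy.1, eqv_trans' he (eqv_symm' hya) hxy.2, ?_, ?_⟩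
    · refine ⟨y, hy1, ?_⟩
      rcases hy2 with rfl | hy2
      · exact hdV
      · exact hy2
    · refine ⟨x, hx1, ?_⟩
      rcases hx2 with rfl | hx2
      · exact ⟨⟨Or.inr rfl, Or.inl hce⟩, hcV⟩
      · exact hx2
  · rintro ⟨hac, had, ⟨y, hyU, hyV⟩, ⟨x, hxU, hxV⟩⟩
    have hxa := memA x hxU
    have hya := memB y hyU
    have hxye : (x, y) ∈ e := by
      rcases hxa.1 with h1 | rfl
      · rcases hya.2 with h2 | h2
        · exact he _ _ _ h1 h2
        · rw [← h2]; exact h1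
      · rcases hya.2 with h2 | h2
        · exact h2
        · rw [← h2]; exact hae
    constructor
    · exact ⟨(x, y), ⟨hxye, hxU, hyU⟩, hxye, Or.inr hxV, Or.inr hyV⟩
    · apply Set.eq_empty_iff_forall_notMem.mpr
      rintro ⟨u, v⟩ ⟨⟨hue, hu1, hv1⟩, -, hnot⟩
      exact hnot (Or.inl ⟨hcd, eqv_trans' he (memA u hu1) hac,
        eqv_trans' he (memB v hv1) had⟩)
end
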